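/- If A is a Type 1 RE matrix with parameters (λ, μ, b₋, b₊, y) and one lets μ → 0 (i.e. sets μ = 0 and deletes the now-forced-zero off-diagonal entries), the resulting matrix λ Σ_{i=1}^{b₊-1} e^i_i + Σ_{i∈Y'} y_i e^{σ(i)}_i is a Type 2 RE matrix; in particular the limit of Type 1 solutions as one eigenvalue tends to zero satisfies the reflection equation. -/
import Mathlib


open Matrix Kronecker

/-- The coefficient `s_{ik}`: `q - q⁻¹` if `i < k`, `q` if `i = k`, `0` if `i > k`. -/
noncomputable def sCoeff {n : ℕ} (q : ℂ) (i k : Fin n) : ℂ :=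
  if (i : ℕ) < (k : ℕ) then q - q⁻¹ else if i = k then q else 0

/-- The standard `U_q(gl(n))` braid matrix
`S = Σ_{i,k} s_{ik} e^i_i ⊗ e^k_k + Σ_{i≠j} e^i_j ⊗ e^j_i` on `ℂ^n ⊗ ℂ^n`. -/
noncomputable def braidS (n : ℕ) (q : ℂ) :
    Matrix (Fin n × Fin n) (Fin n × Fin n) ℂ :=
  fun p r =>
    (if p.1 = r.1 ∧ p.2 = r.2 then sCoeff q p.1 p.2 else 0) +
    (if p.1 ≠ p.2 ∧ r.1 = p.2 ∧ r.2 = p.1 then 1 else 0)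

/-- `A₂ = 1 ⊗ A` on `ℂ^n ⊗ ℂ^n`. -/
noncomputable def A2 {n : ℕ} (A : Matrix (Fin n) (Fin n) ℂ) :
    Matrix (Fin n × Fin n) (Fin n × Fin n) ℂ :=
  (1 : Matrix (Fin n) (Fin n) ℂ) ⊗ₖ A

/-- The reflection equation `S A₂ S A₂ = A₂ S A₂ S`. -/
noncomputable def RE (n : ℕ) (q : ℂ) (A : Matrix (Fin n) (Fin n) ℂ) : Prop :=
  braidS n q * A2 A * braidS n q * A2 A = A2 A * braidS n q * A2 A * braidS n q

/-- Membership in `Y = [1,b₋] ∪ [b₊, b₊+b₋-1]` (1-based). -/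
def memY (bm bp k : ℕ) : Prop := (1 ≤ k ∧ k ≤ bm) ∨ (bp ≤ k ∧ k ≤ bp + bm - 1)

instance (bm bp k : ℕ) : Decidable (memY bm bp k) := by unfold memY; infer_instance

/- ### auxiliary definitions -/

noncomputable def pC (bp : ℕ) (lam : ℂ) {n : ℕ} (i : Fin n) : ℂ :=
  if (i : ℕ) + 1 < bp then lam else 0

noncomputable def eE (bm bp : ℕ) (Y' : Finset ℕ) (y : ℕ → ℂ) {n : ℕ} (j i : Fin n) : ℂ :=
  if ((i : ℕ) + 1 ∈ Y' ∧ (j : ℕ) + 1 = bp + bm - ((i : ℕ) + 1)) then y ((i : ℕ) + 1) else 0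

noncomputable def Am (bm bp : ℕ) (lam : ℂ) (Y' : Finset ℕ) (y : ℕ → ℂ) {n : ℕ} :
    Matrix (Fin n) (Fin n) ℂ :=
  fun j i => (if j = i then pC bp lam i else 0) + eE bm bp Y' y j i

/- ### entry lemmas -/

lemma SA2_apply {n : ℕ} (q : ℂ) (A : Matrix (Fin n) (Fin n) ℂ) (a b e f : Fin n) :
    (braidS n q * A2 A) (a,b) (e,f) =
      sCoeff q a b * (if e = a then A b f else 0) +
      (if e = b ∧ a ≠ b then A a f else 0) := by
  rw [Matrix.mul_apply, Fintype.sum_prod_type]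
  simp only [braidS, A2, kroneckerMap_apply, Matrix.one_apply, ne_eq, add_mul, ite_mul,
    one_mul, zero_mul, mul_ite, mul_zero, Finset.sum_add_distrib]
  rw [Finset.sum_comm]
  simp [Finset.sum_ite_eq, Finset.sum_ite_eq', eq_comm, and_comm]
  rw [Finset.sum_add_distrib]
  congr 1
  · by_cases h : a = e <;> simp [h]
  · by_cases h : b = e <;> by_cases h2 : a = b <;> simp_all

lemma mulS_apply {n : ℕ} (q : ℂ) (M : Matrix (Fin n × Fin n) (Fin n × Fin n) ℂ)
    (p : Fin n × Fin n) (g h : Fin n) :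
    (M * braidS n q) p (g,h) =
      sCoeff q g h * M p (g,h) + (if h ≠ g then M p (h,g) else 0) := by
  rw [Matrix.mul_apply, Fintype.sum_prod_type]
  simp only [braidS, ne_eq, mul_add, mul_ite, mul_zero, mul_one, Finset.sum_add_distrib]
  congr 1
  · rw [show (∑ x : Fin n, ∑ x_1 : Fin n, if x = g ∧ x_1 = h then M p (x, x_1) * sCoeff q x x_1 else 0)
        = ∑ x : Fin n, if x = g then (∑ x_1 : Fin n, if x_1 = h then M p (x, x_1) * sCoeff q x x_1 else 0) else 0 from
        Finset.sum_congr rfl (fun x _ => by by_cases hx : x = g <;> simp [hx, ite_and])]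
    simp [Finset.sum_ite_eq', mul_comm]
  · rw [show (∑ x : Fin n, ∑ x_1 : Fin n, if ¬x = x_1 ∧ g = x_1 ∧ h = x then M p (x, x_1) else 0)
        = ∑ x : Fin n, if x = h then (∑ x_1 : Fin n, if x_1 = g ∧ ¬ h = g then M p (x, x_1) else 0) else 0 from
        Finset.sum_congr rfl (fun x _ => by
          by_cases hx : x = h
          · subst hx; rw [if_pos rfl]
            exact Finset.sum_congr rfl (fun x1 _ => by
              by_cases hx1 : x1 = g
              · subst hx1; simp [and_comm, eq_comm]
              · rw [if_neg (by rintro ⟨-, hg, -⟩; exact hx1 hg.symm),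
                  if_neg (by rintro ⟨hg, -⟩; exact hx1 hg)])
          · rw [if_neg hx]
            exact Finset.sum_eq_zero (fun x1 _ => by
              rw [if_neg]; rintro ⟨-, -, h3⟩; exact hx h3.symm))]
    simp only [Finset.sum_ite_eq', Finset.mem_univ, if_true, ite_and]

lemma mul_A2_apply {n : ℕ} (A : Matrix (Fin n) (Fin n) ℂ)
    (M : Matrix (Fin n × Fin n) (Fin n × Fin n) ℂ) (p : Fin n × Fin n) (u v : Fin n) :
    (M * A2 A) p (u,v) = ∑ h, M p (u,h) * A h v := by
  rw [Matrix.mul_apply, Fintype.sum_prod_type]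
  simp [A2, Matrix.one_apply, mul_ite, mul_zero, mul_one, ite_mul, zero_mul, one_mul,
    Finset.sum_ite_eq, Finset.sum_ite_eq', mul_assoc]

lemma A2_mul_apply {n : ℕ} (A : Matrix (Fin n) (Fin n) ℂ)
    (M : Matrix (Fin n × Fin n) (Fin n × Fin n) ℂ) (a b : Fin n) (r : Fin n × Fin n) :
    (A2 A * M) (a,b) r = ∑ h, A b h * M (a,h) r := by
  rw [Matrix.mul_apply, Fintype.sum_prod_type]
  simp [A2, Matrix.one_apply, ite_mul, zero_mul, one_mul,
    Finset.sum_ite_eq, Finset.sum_ite_eq']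

/- ### structural lemmas -/

lemma eE_struct {n : ℕ} {bm bp : ℕ} {Y' : Finset ℕ} {y : ℕ → ℂ}
    (hb : bm < bp) (hY' : ∀ k ∈ Y', memY bm bp k) {b v : Fin n}
    (h : eE bm bp Y' y b v ≠ 0) :
    ((v : ℕ) + 1 ∈ Y') ∧ ((b : ℕ) + 1) + ((v : ℕ) + 1) = bp + bm ∧
      (((v : ℕ) + 1 ≤ bm ∧ bp ≤ (b : ℕ) + 1) ∨ (bp ≤ (v : ℕ) + 1 ∧ (b : ℕ) + 1 ≤ bm)) := by
  unfold eE at h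
  split_ifs at h with hc
  · obtain ⟨h1, h2⟩ := hc
    have h3 := hY' _ h1
    unfold memY at h3
    refine ⟨h1, by omega, by omega⟩
  · exact absurd rfl h

lemma eE_diag {n : ℕ} {bm bp : ℕ} {Y' : Finset ℕ} {y : ℕ → ℂ}
    (hb : bm < bp) (hY' : ∀ k ∈ Y', memY bm bp k) (b : Fin n) :
    eE bm bp Y' y b b = 0 := by
  by_contra h
  obtain ⟨h1, h2, h3⟩ := eE_struct hb hY' h
  omega

lemma eE_mul {n : ℕ} {bm bp : ℕ} {Y' : Finset ℕ} {y : ℕ → ℂ}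
    (hpair : ∀ k ∈ Y', bp + bm - k ∉ Y') (x h z : Fin n) :
    eE bm bp Y' y x h * eE bm bp Y' y h z = 0 := by
  by_cases h1 : ((h : ℕ) + 1 ∈ Y' ∧ (x : ℕ) + 1 = bp + bm - ((h : ℕ) + 1))
  · by_cases h2 : ((z : ℕ) + 1 ∈ Y' ∧ (h : ℕ) + 1 = bp + bm - ((z : ℕ) + 1))
    · exact absurd (h2.2 ▸ h1.1) (hpair _ h2.1)
    · simp [eE, h2]
  · simp [eE, h1]

lemma Am_diag {n : ℕ} {bm bp : ℕ} {lam : ℂ} {Y' : Finset ℕ} {y : ℕ → ℂ}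
    (hb : bm < bp) (hY' : ∀ k ∈ Y', memY bm bp k) (b : Fin n) :
    Am bm bp lam Y' y b b = pC bp lam b := by
  simp [Am, eE_diag hb hY']

lemma Am_off {n : ℕ} {bm bp : ℕ} {lam : ℂ} {Y' : Finset ℕ} {y : ℕ → ℂ}
    {b v : Fin n} (h : b ≠ v) :
    Am bm bp lam Y' y b v = eE bm bp Y' y b v := by
  simp [Am, h]

lemma Am_mul {n : ℕ} {bm bp : ℕ} {lam : ℂ} {Y' : Finset ℕ} {y : ℕ → ℂ}
    (hb : bm < bp) (hY' : ∀ k ∈ Y', memY bm bp k) (hpair : ∀ k ∈ Y', bp + bm - k ∉ Y')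
    (b h v : Fin n) :
    Am bm bp lam Y' y b h * Am bm bp lam Y' y h v =
      (if h = b then pC bp lam b * Am bm bp lam Y' y b v else 0) +
      (if h = v then pC bp lam v * eE bm bp Y' y b v else 0) := by
  by_cases h1 : h = b
  · subst h1
    by_cases h2 : h = v
    · subst h2
      simp [Am, eE_diag hb hY']
    · rw [if_pos rfl, if_neg h2, Am_diag hb hY', add_zero]
  · by_cases h2 : h = v
    · subst h2
      rw [if_neg h1, if_pos rfl, Am_off (fun e => h1 e.symm), Am_diag hb hY', zero_add,
        mul_comm]
    · rw [if_neg h1, if_neg h2, Am_off (fun e => h1 e.symm), Am_off h2,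
        eE_mul hpair, add_zero]

lemma Tsum {n : ℕ} {bm bp : ℕ} {lam : ℂ} {Y' : Finset ℕ} {y : ℕ → ℂ} (q : ℂ)
    (hb : bm < bp) (hY' : ∀ k ∈ Y', memY bm bp k) (hpair : ∀ k ∈ Y', bp + bm - k ∉ Y')
    (x c w : Fin n) :
    ∑ h, sCoeff q x h * (Am bm bp lam Y' y c h * Am bm bp lam Y' y h w) =
      sCoeff q x c * (pC bp lam c * Am bm bp lam Y' y c w) +
      sCoeff q x w * (pC bp lam w * eE bm bp Y' y c w) := by
  rw [Finset.sum_congr rfl (fun h _ => by rw [Am_mul hb hY' hpair])]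
  simp [mul_add, Finset.sum_add_distrib, mul_ite, mul_zero, Finset.sum_ite_eq']

/- ### closed forms for the two sides, for an arbitrary matrix A -/

lemma LHS_entry {n : ℕ} (q : ℂ) (A : Matrix (Fin n) (Fin n) ℂ) (a b u v : Fin n) :
    ∑ h, (sCoeff q u h *
          (sCoeff q a b * (if u = a then A b h else 0) + (if u = b ∧ a ≠ b then A a h else 0))
        + (if h ≠ u then
            sCoeff q a b * (if h = a then A b u else 0) + (if h = b ∧ a ≠ b then A a u else 0)
          else 0)) * A h v =
      (if u = a then sCoeff q a b * ∑ h, sCoeff q u h * (A b h * A h v) else 0)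
      + (if u = b ∧ a ≠ b then ∑ h, sCoeff q u h * (A a h * A h v) else 0)
      + (if a ≠ u then sCoeff q a b * (A b u * A a v) else 0)
      + (if a ≠ b ∧ b ≠ u then A a u * A b v else 0) := by
  have hsum : ∀ h : Fin n, (sCoeff q u h *
          (sCoeff q a b * (if u = a then A b h else 0) + (if u = b ∧ a ≠ b then A a h else 0))
        + (if h ≠ u then
            sCoeff q a b * (if h = a then A b u else 0) + (if h = b ∧ a ≠ b then A a u else 0)
          else 0)) * A h v =
      (if u = a then sCoeff q a b * (sCoeff q u h * (A b h * A h v)) else 0)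
      + (if u = b ∧ a ≠ b then sCoeff q u h * (A a h * A h v) else 0)
      + (if h = a then (if h ≠ u then sCoeff q a b * (A b u * A h v) else 0) else 0)
      + (if h = b then (if a ≠ b ∧ h ≠ u then A a u * A h v else 0) else 0) := by
    intro h
    by_cases h1 : u = a <;> by_cases h2 : u = b <;> by_cases h3 : a = b <;>
      by_cases h4 : h = a <;> by_cases h5 : h = b <;> by_cases h6 : h = u <;>
        simp_all <;> ring
  rw [Finset.sum_congr rfl (fun h _ => hsum h)]
  simp only [Finset.sum_add_distrib]
  congr 1
  · congr 1
    · congr 1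
      · by_cases h1 : u = a <;> simp [h1, Finset.mul_sum]
      · by_cases h1 : u = b ∧ a ≠ b <;> simp [h1]
    · rw [Finset.sum_ite_eq' Finset.univ a]
      simp [eq_comm, ne_comm]
  · rw [Finset.sum_ite_eq' Finset.univ b]
    simp only [Finset.mem_univ, if_true]

lemma RHS_entry {n : ℕ} (q : ℂ) (A : Matrix (Fin n) (Fin n) ℂ) (a b u v : Fin n) :
    ∑ h, A b h * (sCoeff q u v *
          (sCoeff q a h * (if u = a then A h v else 0) + (if u = h ∧ a ≠ h then A a v else 0))
        + (if v ≠ u then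
            sCoeff q a h * (if v = a then A h u else 0) + (if v = h ∧ a ≠ h then A a u else 0)
          else 0)) =
      (if u = a then sCoeff q u v * ∑ h, sCoeff q a h * (A b h * A h v) else 0)
      + (if a ≠ u then sCoeff q u v * (A b u * A a v) else 0)
      + (if v = a ∧ v ≠ u then ∑ h, sCoeff q a h * (A b h * A h u) else 0)
      + (if v ≠ u ∧ a ≠ v then A b v * A a u else 0) := by
  have hsum : ∀ h : Fin n, A b h * (sCoeff q u v *
          (sCoeff q a h * (if u = a then A h v else 0) + (if u = h ∧ a ≠ h then A a v else 0))
        + (if v ≠ u then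
            sCoeff q a h * (if v = a then A h u else 0) + (if v = h ∧ a ≠ h then A a u else 0)
          else 0)) =
      (if u = a then sCoeff q u v * (sCoeff q a h * (A b h * A h v)) else 0)
      + (if u = h then (if a ≠ h then sCoeff q u v * (A b h * A a v) else 0) else 0)
      + (if v = a ∧ v ≠ u then sCoeff q a h * (A b h * A h u) else 0)
      + (if v = h then (if v ≠ u ∧ a ≠ h then A b h * A a u else 0) else 0) := by
    intro h
    by_cases h1 : u = a <;> by_cases h2 : u = h <;> by_cases h3 : a = h <;>
      by_cases h4 : v = u <;> by_cases h5 : v = a <;> by_cases h6 : v = h <;>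
        simp_all <;> ring
  rw [Finset.sum_congr rfl (fun h _ => hsum h)]
  simp only [Finset.sum_add_distrib]
  congr 1
  · congr 1
    · congr 1
      · by_cases h1 : u = a <;> simp [h1, Finset.mul_sum]
      · rw [Finset.sum_ite_eq Finset.univ u]
        simp [eq_comm, ne_comm]
    · by_cases h1 : v = a ∧ v ≠ u <;> simp [h1]
  · rw [Finset.sum_ite_eq Finset.univ v]
    simp [eq_comm, ne_comm]

/- ### sCoeff evaluation -/

lemma s_lt {n : ℕ} (q : ℂ) {i k : Fin n} (h : (i : ℕ) < (k : ℕ)) :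
    sCoeff q i k = q - q⁻¹ := by simp [sCoeff, h]

lemma s_self {n : ℕ} (q : ℂ) (i : Fin n) : sCoeff q i i = q := by simp [sCoeff]

lemma s_gt {n : ℕ} (q : ℂ) {i k : Fin n} (h : (k : ℕ) < (i : ℕ)) :
    sCoeff q i k = 0 := by
  rw [sCoeff, if_neg (by omega), if_neg (fun e => by subst e; omega)]

/- ### the central scalar identity -/

lemma key {n : ℕ} {q : ℂ} (hq : q ≠ 0) {bm bp : ℕ} (hb : bm < bp)
    (A E : Matrix (Fin n) (Fin n) ℂ) (P : Fin n → ℂ) (lam : ℂ)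
    (hdiag : ∀ i, A i i = P i)
    (hoff : ∀ {i j : Fin n}, i ≠ j → A i j = E i j)
    (hEE : ∀ x h z : Fin n, E x h * E h z = 0)
    (hstruct : ∀ {c w : Fin n}, E c w ≠ 0 →
      ((c : ℕ) + 1) + ((w : ℕ) + 1) = bp + bm ∧
        (((w : ℕ) + 1 ≤ bm ∧ bp ≤ (c : ℕ) + 1) ∨ (bp ≤ (w : ℕ) + 1 ∧ (c : ℕ) + 1 ≤ bm)))
    (hPdef : ∀ i : Fin n, P i = if (i : ℕ) + 1 < bp then lam else 0)
    (a b u v : Fin n) :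
    (if u = a then
        sCoeff q a b * (sCoeff q u b * (P b * A b v) + sCoeff q u v * (P v * E b v)) else 0)
    + (if u = b ∧ a ≠ b then
        sCoeff q u a * (P a * A a v) + sCoeff q u v * (P v * E a v) else 0)
    + (if a ≠ u then sCoeff q a b * (A b u * A a v) else 0)
    + (if a ≠ b ∧ b ≠ u then A a u * A b v else 0)
    =
    (if u = a then
        sCoeff q u v * (sCoeff q a b * (P b * A b v) + sCoeff q a v * (P v * E b v)) else 0)
    + (if a ≠ u then sCoeff q u v * (A b u * A a v) else 0)
    + (if v = a ∧ v ≠ u then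
        sCoeff q a b * (P b * A b u) + sCoeff q a u * (P u * E b u) else 0)
    + (if v ≠ u ∧ a ≠ v then A b v * A a u else 0) := by
  have hq1 : q * q⁻¹ = 1 := mul_inv_cancel₀ hq
  have hPlam : ∀ i : Fin n, (i : ℕ) + 1 < bp → P i = lam := fun i h => by
    rw [hPdef, if_pos h]
  have hP0 : ∀ i : Fin n, ¬ ((i : ℕ) + 1 < bp) → P i = 0 := fun i h => by
    rw [hPdef, if_neg h]
  have hEdiag : ∀ i : Fin n, E i i = 0 := fun i => by
    by_contra h
    obtain ⟨h1, h2⟩ := hstruct h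
    omega
  by_cases hau : u = a
  · subst hau
    simp only [ne_eq, not_true_eq_false, and_false, false_and, if_false, ite_false,
      add_zero, zero_add, if_pos rfl, not_true, false_and]
    rw [if_pos trivial, if_pos trivial,
      if_neg (fun h : u = b ∧ ¬u = b => h.2 h.1),
      if_neg (fun h : v = u ∧ ¬v = u => h.2 h.1), hdiag]
    by_cases hbv : b = v
    · subst hbv
      rw [hdiag, hEdiag]
      by_cases hub2 : u = b <;> simp [hub2] <;> ring
    · rw [hoff hbv]
      by_cases hE : E b v = 0
      · simp [hE]
      · obtain ⟨hs, hcases⟩ := hstruct hE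
        rcases hcases with ⟨hv1, hb1⟩ | ⟨hv1, hb1⟩
        · -- v+1 ≤ bm, bp ≤ b+1 :  P b = 0, P v = lam, v < b
          rw [hP0 b (by omega), hPlam v (by omega)]
          rcases Nat.lt_trichotomy (u : ℕ) (v : ℕ) with h1 | h1 | h1
          · rw [s_lt q h1, s_lt q (show (u : ℕ) < (b : ℕ) by omega),
              if_pos ⟨fun e : u = b => by have := congrArg Fin.val e; omega,
                fun e : b = u => by have := congrArg Fin.val e; omega⟩,
              if_pos ⟨fun e : v = u => by have := congrArg Fin.val e; omega,
                fun e : u = v => by have := congrArg Fin.val e; omega⟩]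
            ring
          · have huv : u = v := Fin.ext h1
            subst huv
            rw [hPlam u (by omega), s_self, s_lt q (show (u : ℕ) < (b : ℕ) by omega),
              if_pos ⟨fun e : u = b => by have := congrArg Fin.val e; omega,
                fun e : b = u => by have := congrArg Fin.val e; omega⟩,
              if_neg (fun h : ¬u = u ∧ ¬u = u => h.1 rfl)]
            linear_combination (-(lam * E b u)) * hq1
          · rw [s_gt q h1]
            by_cases hub2 : u = b
            · subst hub2
              rw [hP0 u (by omega),
                if_neg (fun h : ¬u = u ∧ ¬u = u => h.1 rfl),
                if_pos ⟨fun e : v = u => by have := congrArg Fin.val e; omega,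
                  fun e : u = v => by have := congrArg Fin.val e; omega⟩]
              ring
            · rw [if_pos ⟨hub2, fun e => hub2 e.symm⟩,
                if_pos ⟨fun e : v = u => by have := congrArg Fin.val e; omega,
                  fun e : u = v => by have := congrArg Fin.val e; omega⟩]
              ring
        · -- bp ≤ v+1, b+1 ≤ bm :  P b = lam, P v = 0, b < v
          rw [hPlam b (by omega), hP0 v (by omega)]
          rcases Nat.lt_trichotomy (u : ℕ) (b : ℕ) with h1 | h1 | h1
          · rw [s_lt q h1, s_lt q (show (u : ℕ) < (v : ℕ) by omega),
              if_pos ⟨fun e : u = b => by have := congrArg Fin.val e; omega,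
                fun e : b = u => by have := congrArg Fin.val e; omega⟩,
              if_pos ⟨fun e : v = u => by have := congrArg Fin.val e; omega,
                fun e : u = v => by have := congrArg Fin.val e; omega⟩]
            ring
          · have hub2 : u = b := Fin.ext h1
            subst hub2
            rw [hPlam u (by omega), s_self, s_lt q (show (u : ℕ) < (v : ℕ) by omega),
              if_neg (fun h : ¬u = u ∧ ¬u = u => h.1 rfl),
              if_pos ⟨fun e : v = u => by have := congrArg Fin.val e; omega,
                fun e : u = v => by have := congrArg Fin.val e; omega⟩]
            linear_combination lam * E u v * hq1
          · rw [s_gt q h1]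
            by_cases huv2 : u = v
            · subst huv2
              rw [hP0 u (by omega),
                if_pos ⟨fun e : u = b => by have := congrArg Fin.val e; omega,
                  fun e : b = u => by have := congrArg Fin.val e; omega⟩,
                if_neg (fun h : ¬u = u ∧ ¬u = u => h.1 rfl)]
              ring
            · rw [if_pos ⟨fun e : u = b => by have := congrArg Fin.val e; omega,
                  fun e : b = u => by have := congrArg Fin.val e; omega⟩,
                if_pos ⟨fun e => huv2 e.symm, huv2⟩]
              ring
  · by_cases hub : u = b
    · by_cases hva : v = a
      · -- u = b, v = a
        rw [hub, hva]
        have hab : ¬b = a := fun e => hau (hub.trans e)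
        rw [if_neg hab, if_pos (show b = b ∧ ¬a = b from ⟨rfl, fun e => hab e.symm⟩),
          if_pos (show ¬a = b from fun e => hab e.symm),
          if_neg (show ¬(¬a = b ∧ ¬b = b) from fun h => h.2 rfl),
          if_pos (show a = a ∧ ¬a = b from ⟨rfl, fun e => hab e.symm⟩),
          if_neg (show ¬(¬a = b ∧ ¬a = a) from fun h => h.2 rfl),
          if_neg hab, if_pos (show ¬a = b from fun e => hab e.symm),
          hdiag, hdiag, hEdiag, hEdiag]
        by_cases hpa : (a : ℕ) + 1 < bp <;> by_cases hpb : (b : ℕ) + 1 < bp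
        · rw [hPlam a hpa, hPlam b hpb]; ring
        · rw [hPlam a hpa, hP0 b hpb, s_gt q (show (a : ℕ) < (b : ℕ) by omega)]; ring
        · rw [hP0 a hpa, hPlam b hpb, s_gt q (show (b : ℕ) < (a : ℕ) by omega)]; ring
        · rw [hP0 a hpa, hP0 b hpb]; ring
      · -- u = b, v ≠ a
        rw [hub]
        have hab : ¬b = a := fun e => hau (hub.trans e)
        have hav : a ≠ v := fun e => hva e.symm
        rw [if_neg hab, if_pos (show b = b ∧ ¬a = b from ⟨rfl, fun e => hab e.symm⟩),
          if_pos (show ¬a = b from fun e => hab e.symm),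
          if_neg (show ¬(¬a = b ∧ ¬b = b) from fun h => h.2 rfl),
          if_neg (show ¬(v = a ∧ ¬v = b) from fun h => hva h.1),
          if_neg hab, if_pos (show ¬a = b from fun e => hab e.symm),
          hdiag, hoff hav, hoff (show a ≠ b from fun e => hab e.symm)]
        have hr4 : (if ¬v = b ∧ ¬a = v then A b v * E a b else 0) = 0 := by
          by_cases hvb : v = b
          · rw [if_neg (show ¬(¬v = b ∧ ¬a = v) from fun h => h.1 hvb)]
          · rw [if_pos (show ¬v = b ∧ ¬a = v from ⟨hvb, hav⟩),
              hoff (show b ≠ v from fun e => hvb e.symm),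
              show E b v * E a b = 0 from by rw [mul_comm]; exact hEE a b v]
        rw [hr4]
        by_cases hEav : E a v = 0
        · rw [hEav]; ring
        · obtain ⟨hs, hcases⟩ := hstruct hEav
          rcases hcases with ⟨hv1, ha1⟩ | ⟨hv1, ha1⟩
          · rw [hP0 a (by omega), hPlam v (by omega)]
            by_cases hpb : (b : ℕ) + 1 < bp
            · rw [hPlam b hpb, s_gt q (show (b : ℕ) < (a : ℕ) by omega)]; ring
            · rw [hP0 b hpb, s_gt q (show (v : ℕ) < (b : ℕ) by omega)]; ring
          · rw [hPlam a (by omega), hP0 v (by omega)]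
            by_cases hpb : (b : ℕ) + 1 < bp
            · rw [hPlam b hpb, s_lt q (show (b : ℕ) < (v : ℕ) by omega)]
              rcases Nat.lt_trichotomy (a : ℕ) (b : ℕ) with h1 | h1 | h1
              · rw [s_lt q h1, s_gt q h1]; ring
              · exact absurd (Fin.ext h1).symm hab
              · rw [s_lt q h1, s_gt q h1]; ring
            · rw [hP0 b hpb, s_gt q (show (a : ℕ) < (b : ℕ) by omega)]; ring
    · by_cases hva : v = a
      · -- u ≠ b, v = a
        rw [hva]
        have hou : a ≠ u := fun e => hau e.symm
        have hbu : b ≠ u := fun e => hub e.symm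
        rw [if_neg hau, if_neg (show ¬(u = b ∧ ¬a = b) from fun h => hub h.1),
          if_pos (show ¬a = u from hou),
          if_pos (show a = a ∧ ¬a = u from ⟨rfl, hou⟩),
          if_neg (show ¬(¬a = u ∧ ¬a = a) from fun h => h.2 rfl),
          if_neg hau, if_pos (show ¬a = u from hou),
          hdiag, hoff hbu]
        have ht4 : (if ¬a = b ∧ ¬b = u then A a u * A b a else 0) = 0 := by
          by_cases hab : a = b
          · rw [if_neg (show ¬(¬a = b ∧ ¬b = u) from fun h => h.1 hab)]
          · rw [if_pos (show ¬a = b ∧ ¬b = u from ⟨hab, hbu⟩), hoff hou,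
              hoff (show b ≠ a from fun e => hab e.symm),
              show E a u * E b a = 0 from by rw [mul_comm]; exact hEE b a u]
        rw [ht4]
        by_cases hEbu : E b u = 0
        · rw [hEbu]; ring
        · obtain ⟨hs, hcases⟩ := hstruct hEbu
          rcases hcases with ⟨hu1, hb1⟩ | ⟨hu1, hb1⟩
          · rw [hP0 b (by omega), hPlam u (by omega)]
            by_cases hpa : (a : ℕ) + 1 < bp
            · rw [hPlam a hpa, s_lt q (show (a : ℕ) < (b : ℕ) by omega)]
              rcases Nat.lt_trichotomy (u : ℕ) (a : ℕ) with h1 | h1 | h1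
              · rw [s_lt q h1, s_gt q h1]; ring
              · exact absurd (Fin.ext h1) hau
              · rw [s_lt q h1, s_gt q h1]; ring
            · rw [hP0 a hpa, s_gt q (show (u : ℕ) < (a : ℕ) by omega)]; ring
          · rw [hPlam b (by omega), hP0 u (by omega)]
            by_cases hpa : (a : ℕ) + 1 < bp
            · rw [hPlam a hpa, s_gt q (show (a : ℕ) < (u : ℕ) by omega)]; ring
            · rw [hP0 a hpa, s_gt q (show (b : ℕ) < (a : ℕ) by omega)]; ring
      · -- u ≠ b, v ≠ a
        have hou : a ≠ u := fun e => hau e.symm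
        have hbu : b ≠ u := fun e => hub e.symm
        have hav : a ≠ v := fun e => hva e.symm
        rw [if_neg hau, if_neg (show ¬(u = b ∧ ¬a = b) from fun h => hub h.1),
          if_pos (show ¬a = u from hou), if_neg hau,
          if_pos (show ¬a = u from hou),
          if_neg (show ¬(v = a ∧ ¬v = u) from fun h => hva h.1),
          hoff hbu, hoff hav, hoff hou]
        have hpart1 : sCoeff q a b * (E b u * E a v) = sCoeff q u v * (E b u * E a v) := by
          by_cases hE1 : E b u = 0
          · rw [hE1]; ring
          · by_cases hE2 : E a v = 0
            · rw [hE2]; ring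
            · obtain ⟨hs1, -⟩ := hstruct hE1
              obtain ⟨hs2, -⟩ := hstruct hE2
              have hss : sCoeff q a b = sCoeff q u v := by
                rcases Nat.lt_trichotomy (a : ℕ) (b : ℕ) with h1 | h1 | h1
                · rw [s_lt q h1, s_lt q (show (u : ℕ) < (v : ℕ) by omega)]
                · have hab : a = b := Fin.ext h1
                  have huv : u = v := Fin.ext (by omega)
                  rw [hab, huv, s_self, s_self]
                · rw [s_gt q h1, s_gt q (show (v : ℕ) < (u : ℕ) by omega)]
              rw [hss]
        have hpart2 : (if a ≠ b ∧ b ≠ u then E a u * A b v else 0)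
            = (if v ≠ u ∧ a ≠ v then A b v * E a u else 0) := by
          by_cases hEau : E a u = 0
          · simp [hEau]
          · obtain ⟨hsau, -⟩ := hstruct hEau
            by_cases hbv : b = v
            · rw [← hbv]
              rw [if_pos (show ¬a = b ∧ ¬b = u from
                    ⟨fun e => hva (hbv ▸ e.symm : v = a), hbu⟩),
                if_pos (show ¬b = u ∧ ¬a = b from
                    ⟨hbu, fun e => hva (hbv ▸ e.symm : v = a)⟩)]
              ring
            · rw [hoff hbv]
              by_cases hEbv : E b v = 0
              · simp [hEbv]
              · obtain ⟨hsbv, -⟩ := hstruct hEbv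
                by_cases huv : (u : ℕ) = (v : ℕ)
                · have hab : a = b := Fin.ext (by omega)
                  have huv' : v = u := (Fin.ext huv).symm
                  rw [if_neg (show ¬(¬a = b ∧ ¬b = u) from fun h => h.1 hab),
                    if_neg (show ¬(¬v = u ∧ ¬a = v) from fun h => h.1 huv')]
                · rw [if_pos (show ¬a = b ∧ ¬b = u from
                        ⟨fun e => huv (by have := congrArg Fin.val e; omega), hbu⟩),
                    if_pos (show ¬v = u ∧ ¬a = v from
                        ⟨fun e => huv (congrArg Fin.val e).symm, hav⟩)]
                  ring
        rw [hpart1, hpart2]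
        ring


/-- The `μ → 0` degeneration of a Type 1 solution is a Type 2 solution: for any
subset `Y' ⊆ Y = [1,b₋] ∪ [b₊,b₊+b₋-1]` meeting each pair `{i, b₊+b₋-i}` in at
most one element, the matrix `λ Σ_{i=1}^{b₊-1} e^i_i + Σ_{i∈Y'} y_i e^{b₊+b₋-i}_i`
(with all `y_i ≠ 0`) satisfies the reflection equation. -/
theorem typeOne_degeneration_solves_RE (n : ℕ) (hn : 1 ≤ n) (q : ℂ)
    (hq : q ≠ 0) (hq2 : q ^ 2 ≠ 1) (bm bp : ℕ) (hb : bm < bp)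
    (hbn : bm + bp ≤ n + 1) (lam : ℂ) (Y' : Finset ℕ)
    (hY' : ∀ k ∈ Y', memY bm bp k)
    (hpair : ∀ k ∈ Y', bp + bm - k ∉ Y')
    (y : ℕ → ℂ) (hy : ∀ k ∈ Y', y k ≠ 0) :
    RE n q (fun j i =>
      (if j = i ∧ (i : ℕ) + 1 < bp then lam else 0) +
      (if (i : ℕ) + 1 ∈ Y' ∧ (j : ℕ) + 1 = bp + bm - ((i : ℕ) + 1) then
        y ((i : ℕ) + 1) else 0)) := by
  have hA : (fun (j i : Fin n) =>
      (if j = i ∧ (i : ℕ) + 1 < bp then lam else 0) +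
      (if (i : ℕ) + 1 ∈ Y' ∧ (j : ℕ) + 1 = bp + bm - ((i : ℕ) + 1) then
        y ((i : ℕ) + 1) else 0)) = Am bm bp lam Y' y (n := n) := by
    funext j i
    simp only [Am, pC, eE, ite_and]
  unfold RE
  rw [hA]
  set M := Am bm bp lam Y' y (n := n) with hM
  suffices h : braidS n q * A2 M * braidS n q * A2 M
      = A2 M * (braidS n q * A2 M * braidS n q) by
    rw [h, ← Matrix.mul_assoc, ← Matrix.mul_assoc]
  ext ⟨a, b⟩ ⟨u, v⟩
  rw [mul_A2_apply, A2_mul_apply]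
  simp only [mulS_apply, SA2_apply]
  rw [LHS_entry, RHS_entry, hM, Tsum q hb hY' hpair u b v, Tsum q hb hY' hpair u a v,
    Tsum q hb hY' hpair a b v, Tsum q hb hY' hpair a b u]
  exact key hq hb (Am bm bp lam Y' y) (eE bm bp Y' y) (pC bp lam) lam
    (Am_diag hb hY') (fun h => Am_off h) (eE_mul hpair)
    (fun h => (eE_struct hb hY' h).2) (fun i => rfl) a b u v
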